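/- Let (W,S) be a Coxeter group. Let w ∈ W and let →a be a reduced expression for w. Let s, t be two distinct reflections of W with m_{s,t} < ∞. Then the word ρ_{s,t} appears as a subword of the inversion word Invs →a at most once. -/

import Mathlib

/-- The word `ρ_{s,t} = ((st)^0 s, (st)^1 s, …, (st)^{m-1} s)`. -/
def rhoWord {W : Type*} [Group W] (s t : W) (m : ℕ) : List W :=
  (List.range m).map (fun k => (s * t) ^ k * s)

/-- For a reduced expression `ω` of `w` and distinct reflections `s, t`
with `orderOf (s*t)` finite, the word `ρ_{s,t}` appears as a subword of the inversion
word of `ω` at most once: any two strictly increasing position sequences realizing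
`ρ_{s,t}` as a subword coincide. -/
theorem rho_subword_at_most_once {B W : Type*} [Group W] {M : CoxeterMatrix B}
    (cs : CoxeterSystem M W) (w : W) (ω : List B)
    (hred : cs.IsReduced ω) (hw : cs.wordProd ω = w)
    (s t : W) (hs : cs.IsReflection s) (ht : cs.IsReflection t) (hst : s ≠ t)
    (hfin : IsOfFinOrder (s * t)) :
    ∀ idx₁ idx₂ : List ℕ,
      idx₁.Pairwise (· < ·) → idx₂.Pairwise (· < ·) →
      (∀ n ∈ idx₁, n < (cs.leftInvSeq ω).length) →
      (∀ n ∈ idx₂, n < (cs.leftInvSeq ω).length) →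
      idx₁.map (fun n => (cs.leftInvSeq ω).getD n 1) = rhoWord s t (orderOf (s * t)) →
      idx₂.map (fun n => (cs.leftInvSeq ω).getD n 1) = rhoWord s t (orderOf (s * t)) →
      idx₁ = idx₂ := by
  intro idx₁ idx₂ _ _ h₁ h₂ hm₁ hm₂
  have hnd : (cs.leftInvSeq ω).Nodup := hred.nodup_leftInvSeq
  have hlen : idx₁.length = idx₂.length := by
    have := congrArg List.length (hm₁.trans hm₂.symm)
    simpa using this
  apply List.ext_getElem hlen
  intro i hi₁ hi₂
  have hv : (cs.leftInvSeq ω).getD idx₁[i] 1 = (cs.leftInvSeq ω).getD idx₂[i] 1 := by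
    have := congrArg (fun (l : List W) => l[i]?) (hm₁.trans hm₂.symm)
    simpa [List.getElem?_map, List.getElem?_eq_getElem, hi₁, hi₂] using this
  have hlt₁ : idx₁[i] < (cs.leftInvSeq ω).length := h₁ _ (List.getElem_mem hi₁)
  have hlt₂ : idx₂[i] < (cs.leftInvSeq ω).length := h₂ _ (List.getElem_mem hi₂)
  rw [List.getD_eq_getElem _ _ hlt₁, List.getD_eq_getElem _ _ hlt₂] at hv
  exact (List.Nodup.getElem_inj_iff hnd).mp hv
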